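/- Let z₁ < z₂ < ⋯ < z_N be distinct real numbers. Then the N×N matrix A with entries A_{i,j} = e^{-|z_i - z_j|} is symmetric positive definite. -/

import Mathlib

/-- For distinct (strictly increasing) locations `z₁ < z₂ < ⋯ < z_N`, the exponential
covariance matrix `A_{i,j} = e^{-|z_i - z_j|}` is symmetric positive definite. -/
theorem exp_covariance_matrix_posDef
    (N : ℕ) (z : Fin N → ℝ) (hz : StrictMono z) :
    (Matrix.of fun i j : Fin N => Real.exp (-|z i - z j|)).PosDef := by
  classical
  -- F n = exp (2 z (n-1)) for 1 ≤ n ≤ N, else 0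
  set F : ℕ → ℝ := fun n => if h : 0 < n ∧ n ≤ N then Real.exp (2 * z ⟨n - 1, by omega⟩) else 0
    with hF
  set d : ℕ → ℝ := fun k => F (k + 1) - F k with hd
  have hF0 : F 0 = 0 := by simp [hF]
  have hFv : ∀ i : Fin N, F (i.val + 1) = Real.exp (2 * z i) := by
    intro i
    have h : 0 < i.val + 1 ∧ i.val + 1 ≤ N := ⟨Nat.succ_pos _, i.isLt⟩
    simp only [hF, dif_pos h, Nat.add_sub_cancel, Fin.eta]
  have hdpos : ∀ k, k < N → 0 < d k := by
    intro k hk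
    have h1 : F (k + 1) = Real.exp (2 * z ⟨k, hk⟩) := hFv ⟨k, hk⟩
    rcases Nat.eq_zero_or_pos k with h0 | h0
    · subst h0
      simp only [hd, h1, hF0, sub_zero]
      exact Real.exp_pos _
    · have h2 : F k = Real.exp (2 * z ⟨k - 1, by omega⟩) := by
        simp [hF, (by omega : 0 < k ∧ k ≤ N)]
      simp only [hd, h1, h2, sub_pos]
      apply Real.exp_lt_exp.mpr
      have : z ⟨k - 1, by omega⟩ < z ⟨k, hk⟩ := hz (by simp [Fin.lt_def]; omega)
      linarith
  have htel : ∀ i : Fin N, ∑ k ∈ Finset.range (i.val + 1), d k = Real.exp (2 * z i) := by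
    intro i
    rw [hd]
    rw [Finset.sum_range_sub F (i.val + 1), hF0, sub_zero, hFv]
  set B : ℕ → Fin N → ℝ :=
    fun k i => if k ≤ i.val then Real.sqrt (d k) * Real.exp (-z i) else 0 with hB
  -- key Gram identity
  have hkey' : ∀ i j : Fin N, i ≤ j →
      ∑ k ∈ Finset.range N, B k i * B k j = Real.exp (-|z i - z j|) := by
    intro i j hij
    have habs : |z i - z j| = z j - z i := by
      rw [abs_sub_comm]
      exact abs_of_nonneg (by linarith [hz.le_iff_le.mpr hij])
    have step : ∀ k ∈ Finset.range N,
        B k i * B k j = (if k ∈ Finset.range (i.val + 1) then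
          d k * (Real.exp (-z i) * Real.exp (-z j)) else 0) := by
      intro k hk
      rw [Finset.mem_range] at hk
      by_cases hki : k ≤ i.val
      · have hkj : k ≤ j.val := le_trans hki hij
        have hsq : Real.sqrt (d k) * Real.sqrt (d k) = d k :=
          Real.mul_self_sqrt (le_of_lt (hdpos k hk))
        rw [hB]
        simp only [if_pos hki, if_pos hkj,
          if_pos (Finset.mem_range.mpr (Nat.lt_succ_of_le hki))]
        rw [mul_mul_mul_comm, hsq]
      · have hnm : k ∉ Finset.range (i.val + 1) := by
          rw [Finset.mem_range]; omega
        rw [hB]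
        simp only [if_neg hki, if_neg hnm, zero_mul]
    rw [Finset.sum_congr rfl step]
    rw [Finset.sum_ite_mem, Finset.inter_eq_right.mpr
      (Finset.range_subset_range.mpr (by omega : i.val + 1 ≤ N))]
    rw [← Finset.sum_mul, htel i, ← Real.exp_add, ← Real.exp_add, habs]
    congr 1
    ring
  have hkey : ∀ i j : Fin N,
      Real.exp (-|z i - z j|) = ∑ k ∈ Finset.range N, B k i * B k j := by
    intro i j
    rcases le_total i j with h | h
    · exact (hkey' i j h).symm
    · rw [abs_sub_comm]
      rw [← hkey' j i h]
      exact Finset.sum_congr rfl fun k _ => mul_comm _ _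
  rw [Matrix.posDef_iff_dotProduct_mulVec]
  constructor
  · ext i j
    simp only [Matrix.conjTranspose_apply, Matrix.of_apply, star_trivial, abs_sub_comm]
  · intro x hx
    have hform : dotProduct (star x)
        ((Matrix.of fun i j : Fin N => Real.exp (-|z i - z j|)).mulVec x)
        = ∑ k ∈ Finset.range N, (∑ i : Fin N, B k i * x i) ^ 2 := by
      simp only [dotProduct, Matrix.mulVec, Matrix.of_apply, Pi.star_apply,
        star_trivial]
      have e1 : ∀ k ∈ Finset.range N, (∑ i : Fin N, B k i * x i) ^ 2
          = ∑ i : Fin N, ∑ j : Fin N, (B k i * x i) * (B k j * x j) := by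
        intro k _
        rw [sq, Finset.sum_mul_sum]
      rw [Finset.sum_congr rfl e1, Finset.sum_comm]
      refine Finset.sum_congr rfl fun i _ => ?_
      rw [Finset.sum_comm, Finset.mul_sum]
      refine Finset.sum_congr rfl fun j _ => ?_
      rw [hkey i j, Finset.sum_mul, Finset.mul_sum]
      refine Finset.sum_congr rfl fun k _ => ?_
      ring
    rw [hform]
    obtain ⟨i0, hi0⟩ : ∃ i, x i ≠ 0 := Function.ne_iff.mp hx
    set s : Finset (Fin N) := Finset.univ.filter (fun i => x i ≠ 0) with hs'
    have hs : s.Nonempty := ⟨i0, by simp [hs', hi0]⟩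
    set m := s.max' hs with hm'
    have hm : x m ≠ 0 := (Finset.mem_filter.mp (s.max'_mem hs)).2
    have hle : ∀ i, x i ≠ 0 → i ≤ m := fun i hi =>
      Finset.le_max' s i (by simp [hs', hi])
    apply Finset.sum_pos'
    · intro k _; positivity
    · refine ⟨m.val, Finset.mem_range.mpr m.isLt, ?_⟩
      have hsum : (∑ i : Fin N, B m.val i * x i) = B m.val m * x m := by
        apply Finset.sum_eq_single m
        · intro i _ hne
          by_cases hxi : x i = 0
          · rw [hxi, mul_zero]
          · have h1 : i < m := lt_of_le_of_ne (hle i hxi) hne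
            have h2 : ¬ ((m : ℕ) ≤ (i : ℕ)) := Nat.not_le.mpr (Fin.lt_def.mp h1)
            rw [hB]
            simp only [if_neg h2, zero_mul]
        · intro h; exact absurd (Finset.mem_univ m) h
      rw [hsum]
      have hBm : B m.val m = Real.sqrt (d m.val) * Real.exp (-z m) := by
        rw [hB]; simp only [if_pos (le_refl _)]
      have h1 : 0 < Real.sqrt (d m.val) := Real.sqrt_pos.mpr (hdpos m.val m.isLt)
      have hne : B m.val m * x m ≠ 0 := by
        rw [hBm]
        exact mul_ne_zero (mul_ne_zero (ne_of_gt h1) (Real.exp_ne_zero _)) hm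
      exact pow_two_pos_of_ne_zero hne
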